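/- Let n, m, Δ be positive integers, let f : [n] → [Δ], and let D = Σ_{i∈[n]} f(i). Let H be a bipartite graph with vertex classes A = [n] and B = [D] such that: (i) every U ⊆ A with |U| ≤ m satisfies |N(U)| ≥ Δ·|U|; (ii) every U ⊆ B with |U| ≤ m satisfies |N(U)| ≥ |U|; and (iii) for all U ⊆ A and V ⊆ B with |U| ≥ m and |V| ≥ m there is at least one edge of H between U and V. Then there is an f-matching from A into B. -/
import Mathlib


/-- Let `n, m, Δ` be positive integers, `f : [n] → [Δ]`, and `D = Σ_{i∈[n]} f(i)`.
Let `H` be a bipartite graph with vertex classes `A = [n]` and `B = [D]` such that: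
(i) every `U ⊆ A` with `|U| ≤ m` satisfies `|N(U)| ≥ Δ·|U|`;
(ii) every `U ⊆ B` with `|U| ≤ m` satisfies `|N(U)| ≥ |U|`;
(iii) any `U ⊆ A`, `W ⊆ B` with `|U|, |W| ≥ m` have an edge of `H` between them.
Then there is an `f`-matching from `A` into `B`: a family of pairwise disjoint sets
`X a ⊆ N(a)` with `|X a| = f a`. -/
theorem statement_8 (n m Δ : ℕ) (hn : 0 < n) (hm : 0 < m) (hΔ : 0 < Δ)
    (f : Fin n → ℕ) (hf : ∀ i, 1 ≤ f i ∧ f i ≤ Δ)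
    (D : ℕ) (hD : D = ∑ i, f i)
    (H : Fin n → Fin D → Prop)
    (h1 : ∀ U : Set (Fin n), U.ncard ≤ m →
      Δ * U.ncard ≤ ({b : Fin D | ∃ a ∈ U, H a b}).ncard)
    (h2 : ∀ U : Set (Fin D), U.ncard ≤ m →
      U.ncard ≤ ({a : Fin n | ∃ b ∈ U, H a b}).ncard)
    (h3 : ∀ (U : Set (Fin n)) (W : Set (Fin D)), m ≤ U.ncard → m ≤ W.ncard →
      ∃ a ∈ U, ∃ b ∈ W, H a b) :
    ∃ X : Fin n → Set (Fin D),
      (∀ a, X a ⊆ {b : Fin D | H a b}) ∧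
      (∀ a, (X a).ncard = f a) ∧
      (∀ a a', a ≠ a' → Disjoint (X a) (X a')) := by
  classical
  -- expanded index type: `f a` copies of each `a`
  let ι := (i : Fin n) × Fin (f i)
  let t : ι → Finset (Fin D) := fun x => {b : Fin D | H x.1 b}.toFinset
  -- Hall's condition
  have hall : ∀ s : Finset ι, s.card ≤ (s.biUnion t).card := by
    intro s
    set Us : Finset (Fin n) := s.image Sigma.fst with hUs
    -- the neighbourhood of Us
    set NU : Set (Fin D) := {b : Fin D | ∃ a ∈ (↑Us : Set (Fin n)), H a b} with hNU
    have hbiU : (s.biUnion t : Set (Fin D)) = NU := by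
      ext b
      simp only [Finset.coe_biUnion, Set.mem_iUnion, hNU, Set.mem_setOf_eq,
        Finset.mem_coe, Set.mem_toFinset, t, hUs, Finset.mem_image]
      constructor
      · rintro ⟨x, hx, hb⟩
        exact ⟨x.1, ⟨x, hx, rfl⟩, hb⟩
      · rintro ⟨a, ⟨x, hx, rfl⟩, hb⟩
        exact ⟨x, hx, hb⟩
    have hcardNU : (s.biUnion t).card = NU.ncard := by
      rw [← Set.ncard_coe_finset, hbiU]
    -- bound `s.card` by the sum of `f` over `Us`
    have hsub : s ⊆ Us.sigma (fun a => (Finset.univ : Finset (Fin (f a)))) := by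
      intro x hx
      rw [Finset.mem_sigma]
      exact ⟨Finset.mem_image_of_mem _ hx, Finset.mem_univ _⟩
    have hscard : s.card ≤ ∑ a ∈ Us, f a := by
      calc s.card ≤ (Us.sigma (fun a => (Finset.univ : Finset (Fin (f a))))).card :=
            Finset.card_le_card hsub
        _ = ∑ a ∈ Us, f a := by simp [Finset.card_sigma]
    rw [hcardNU]
    by_cases hUm : Us.card ≤ m
    · -- small case: use (i)
      have h1' := h1 (↑Us) (by rwa [Set.ncard_coe_finset])
      rw [Set.ncard_coe_finset] at h1'
      refine le_trans ?_ h1'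
      calc s.card ≤ ∑ a ∈ Us, f a := hscard
        _ ≤ ∑ _a ∈ Us, Δ := Finset.sum_le_sum (fun a _ => (hf a).2)
        _ = Us.card * Δ := by rw [Finset.sum_const, smul_eq_mul]
        _ = Δ * Us.card := Nat.mul_comm _ _
    · -- large case
      push_neg at hUm
      set W : Set (Fin D) := NUᶜ with hW
      have hWm : W.ncard < m := by
        by_contra hc
        push_neg at hc
        obtain ⟨a, ha, b, hb, hab⟩ := h3 (↑Us) W
          (by rw [Set.ncard_coe_finset]; exact hUm.le) hc
        exact hb ⟨a, ha, hab⟩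
      set NW : Set (Fin n) := {a : Fin n | ∃ b ∈ W, H a b} with hNW
      have h2' : W.ncard ≤ NW.ncard := h2 W hWm.le
      have hNWsub : NW ⊆ (↑Us : Set (Fin n))ᶜ := by
        intro a ha hA
        obtain ⟨b, hb, hab⟩ := ha
        exact hb ⟨a, hA, hab⟩
      have hNWcard : NW.ncard ≤ ∑ a ∈ Usᶜ, f a := by
        have h4 : NW.ncard ≤ ((↑Us : Set (Fin n))ᶜ).ncard :=
          Set.ncard_le_ncard hNWsub (Set.toFinite _)
        have h5 : ((↑Us : Set (Fin n))ᶜ).ncard = (Usᶜ : Finset (Fin n)).card := by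
          rw [← Set.ncard_coe_finset, Finset.coe_compl]
        have h6 : (Usᶜ : Finset (Fin n)).card ≤ ∑ a ∈ Usᶜ, f a := by
          calc (Usᶜ : Finset (Fin n)).card = ∑ _a ∈ Usᶜ, 1 := by simp
            _ ≤ ∑ a ∈ Usᶜ, f a := Finset.sum_le_sum (fun a _ => (hf a).1)
        omega
      have hDsum : (∑ a ∈ Us, f a) + (∑ a ∈ Usᶜ, f a) = D := by
        rw [hD, Finset.sum_add_sum_compl]
      have hcompl : NU.ncard + W.ncard = D := by
        have := Set.ncard_add_ncard_compl NU (Set.toFinite _) (Set.toFinite _)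
        rwa [Nat.card_eq_fintype_card, Fintype.card_fin] at this
      omega
  obtain ⟨g, hg_inj, hg_mem⟩ := (Finset.all_card_le_biUnion_card_iff_exists_injective t).mp hall
  refine ⟨fun a => Set.range (fun j : Fin (f a) => g ⟨a, j⟩), ?_, ?_, ?_⟩
  · rintro a b ⟨j, rfl⟩
    have := hg_mem ⟨a, j⟩
    rwa [Set.mem_toFinset] at this
  · intro a
    have hinj : Function.Injective (fun j : Fin (f a) => g ⟨a, j⟩) := by
      intro j j' h
      have := hg_inj h
      exact eq_of_heq (Sigma.mk.inj_iff.mp this).2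
    show (Set.range fun j : Fin (f a) => g ⟨a, j⟩).ncard = f a
    rw [← Set.image_univ, Set.ncard_image_of_injective _ hinj, Set.ncard_univ,
      Nat.card_eq_fintype_card, Fintype.card_fin]
  · intro a a' hne
    rw [Set.disjoint_left]
    rintro b ⟨j, rfl⟩ ⟨j', hj'⟩
    have := hg_inj hj'
    exact hne (congrArg Sigma.fst this).symm
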